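/- Weighted mean ergodic theorem for the noise variance. Let ν be a probability measure on the configuration space Ω = {0,1}^ℤ that is invariant and ergodic under the shift T given by (Tη)(y) = η(y+1), let f ∈ L²(ν), and let G : ℝ → ℝ be continuous with compact support. For ε > 0 define Z_ε(η) = ε·Σ_{x ∈ ℤ} f(T^x η)·G(εx). Then Z_ε converges in L²(ν), as ε → 0⁺, to the constant (∫ f dν)·(∫_ℝ G(u) du). -/

import Mathlib

set_option maxHeartbeats 1000000
open MeasureTheory Filter Topology
set_option synthInstance.maxHeartbeats 1000000

lemma riemann_sum_tendsto (G : ℝ → ℝ) (hGc : Continuous G) (R : ℝ) (hR : 0 ≤ R)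
    (hsupp : ∀ u : ℝ, R < |u| → G u = 0) :
    Tendsto (fun ε : ℝ => ∑' x : ℤ, ε * G (ε * x)) (𝓝[>] 0) (𝓝 (∫ u : ℝ, G u)) := by
  have hGuc : UniformContinuous G := by
    have hcs : HasCompactSupport G := by
      apply HasCompactSupport.intro (isCompact_Icc (a := -R) (b := R))
      intro u hu
      apply hsupp
      by_contra hle
      push_neg at hle
      exact hu (Set.mem_Icc.2 (abs_le.1 hle))
    exact hcs.uniformContinuous_of_continuous hGc
  rw [Metric.tendsto_nhds]
  intro δ' hδ'
  set δ : ℝ := δ' / (2 * R + 5) with hδdef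
  have hδpos : 0 < δ := by positivity
  obtain ⟨ε₀, hε₀pos, hε₀⟩ := Metric.uniformContinuous_iff.1 hGuc δ hδpos
  filter_upwards [Ioo_mem_nhdsGT_of_mem (Set.mem_Ico.2 ⟨le_rfl, lt_min hε₀pos one_pos⟩)]
    with ε hε
  obtain ⟨hεpos, hεlt⟩ := hε
  have hεε₀ : ε < ε₀ := hεlt.trans_le (min_le_left _ _)
  have hε1 : ε ≤ 1 := (hεlt.trans_le (min_le_right _ _)).le
  set N : ℕ := ⌈R / ε⌉₊ with hNdef
  set M : ℕ := N + 1 with hMdef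
  have hM0 : (0:ℝ) ≤ (M:ℝ) := Nat.cast_nonneg _
  have hNε : R ≤ N * ε := by
    rw [← div_le_iff₀ hεpos]; exact Nat.le_ceil _
  have hNε' : (N : ℝ) * ε ≤ R + ε := by
    have : (N : ℝ) ≤ R / ε + 1 := (Nat.ceil_lt_add_one (by positivity)).le
    calc (N:ℝ) * ε ≤ (R / ε + 1) * ε := by nlinarith
    _ = R + ε := by field_simp
  have hMε : R < M * ε := by rw [hMdef]; push_cast; nlinarith
  have hMε' : (M : ℝ) * ε ≤ R + 2 := by rw [hMdef]; push_cast; nlinarith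
  -- the Riemann sum as a finite sum
  have hzero : ∀ x : ℤ, x ∉ Finset.Icc (-(M:ℤ)) ((M:ℤ) - 1) → ε * G (ε * x) = 0 := by
    intro x hx
    rw [Finset.mem_Icc] at hx
    have hor : (M:ℤ) ≤ x ∨ x ≤ -(M:ℤ) := by omega
    have habs : (M:ℝ) * ε ≤ |ε * x| := by
      rw [abs_mul, abs_of_pos hεpos]
      rcases hor with h | h
      · have hx' : ((M:ℝ)) ≤ (x:ℝ) := by exact_mod_cast h
        rw [abs_of_nonneg (le_trans hM0 hx')]; nlinarith
      · have hx' : (x:ℝ) ≤ -(M:ℝ) := by exact_mod_cast h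
        rw [abs_of_nonpos (by nlinarith)]; nlinarith
    rw [hsupp _ (lt_of_lt_of_le hMε habs), mul_zero]
  rw [tsum_eq_sum hzero]
  -- reindex over range (2M)
  set a : ℕ → ℝ := fun k => (-(M:ℝ) + k) * ε with hadef
  have hreindex : ∑ x ∈ Finset.Icc (-(M:ℤ)) ((M:ℤ) - 1), ε * G (ε * x)
      = ∑ k ∈ Finset.range (2 * M), ε * G (a k) := by
    refine Finset.sum_nbij' (fun x => (x + M).toNat) (fun k => (k : ℤ) - M) ?_ ?_ ?_ ?_ ?_
    · intro x hx
      rw [Finset.mem_Icc] at hx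
      rw [Finset.mem_range]
      omega
    · intro k hk
      rw [Finset.mem_range] at hk
      rw [Finset.mem_Icc]
      omega
    · intro x hx; rw [Finset.mem_Icc] at hx; omega
    · intro k hk; rw [Finset.mem_range] at hk; omega
    · intro x hx
      rw [Finset.mem_Icc] at hx
      congr 2
      have hxM : (((x + (M:ℤ)).toNat : ℕ) : ℝ) = (x:ℝ) + M := by
        have : ((x + (M:ℤ)).toNat : ℤ) = x + M := Int.toNat_of_nonneg (by omega)
        exact_mod_cast congrArg (Int.cast : ℤ → ℝ) this
      rw [hadef]
      dsimp only
      rw [hxM]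
      ring
  rw [hreindex]
  -- the integral as a sum of interval integrals
  have hint : ∫ u : ℝ, G u = ∑ k ∈ Finset.range (2 * M), ∫ t in a k..a (k + 1), G t := by
    rw [intervalIntegral.sum_integral_adjacent_intervals
      (fun k _ => hGc.intervalIntegrable _ _)]
    have ha0 : a 0 = -(M : ℝ) * ε := by simp [hadef]
    have ha2M : a (2 * M) = (M : ℝ) * ε := by rw [hadef]; push_cast; ring
    rw [ha0, ha2M, intervalIntegral.integral_of_le (by nlinarith)]
    symm
    apply setIntegral_eq_integral_of_forall_compl_eq_zero
    intro u hu
    rw [Set.mem_Ioc, not_and_or] at hu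
    apply hsupp
    rcases hu with h | h <;> push_neg at h <;> cases abs_cases u <;> nlinarith
  rw [hint]
  have hterm : ∀ k ∈ Finset.range (2 * M),
      dist (ε * G (a k)) (∫ t in a k..a (k + 1), G t) ≤ δ * ε := by
    intro k _
    have hstep : a (k + 1) - a k = ε := by rw [hadef]; push_cast; ring
    have hconst : ε * G (a k) = ∫ _t in a k..a (k + 1), G (a k) := by
      rw [intervalIntegral.integral_const, hstep, smul_eq_mul]
    rw [hconst, dist_eq_norm, ← intervalIntegral.integral_sub
      (intervalIntegrable_const) (hGc.intervalIntegrable _ _)]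
    have hbound : ∀ t ∈ Set.uIoc (a k) (a (k+1)), ‖G (a k) - G t‖ ≤ δ := by
      intro t ht
      have hle : a k ≤ a (k + 1) := by nlinarith [hstep]
      rw [Set.uIoc_of_le hle, Set.mem_Ioc] at ht
      have hd : dist (a k) t < ε₀ := by
        rw [Real.dist_eq, abs_sub_comm, abs_of_nonneg (by linarith [ht.1])]
        linarith [ht.2, hstep]
      have := hε₀ hd
      rw [Real.dist_eq] at this
      exact le_of_lt this
    have hb := intervalIntegral.norm_integral_le_of_norm_le_const hbound
    rwa [hstep, abs_of_pos hεpos] at hb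
  calc dist (∑ k ∈ Finset.range (2 * M), ε * G (a k))
        (∑ k ∈ Finset.range (2 * M), ∫ t in a k..a (k + 1), G t)
      ≤ ∑ k ∈ Finset.range (2 * M), δ * ε := dist_sum_sum_le_of_le _ hterm
    _ = 2 * M * (δ * ε) := by rw [Finset.sum_const, Finset.card_range]; push_cast; ring
    _ ≤ (2 * R + 4) * δ := by nlinarith
    _ < δ' := by
        rw [hδdef, ← mul_div_assoc, div_lt_iff₀ (by linarith)]
        nlinarith

lemma G_window {G : ℝ → ℝ} {R : ℝ} (hsupp : ∀ u : ℝ, R < |u| → G u = 0)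
    {ε : ℝ} (hε : 0 < ε) (x : ℤ) (hx : (⌈R / ε⌉₊ : ℤ) < |x|) : G (ε * x) = 0 := by
  apply hsupp
  have hNε : R ≤ (⌈R / ε⌉₊ : ℝ) * ε := by
    rw [← div_le_iff₀ hε]; exact Nat.le_ceil _
  have h1 : ((⌈R / ε⌉₊ : ℝ)) + 1 ≤ |(x : ℝ)| := by
    have h2 : (⌈R / ε⌉₊ : ℤ) + 1 ≤ |x| := hx
    have := congrArg (Int.cast : ℤ → ℝ) (le_antisymm le_rfl (le_refl (|x|)))
    calc ((⌈R / ε⌉₊ : ℝ)) + 1 = (((⌈R / ε⌉₊ : ℤ) + 1 : ℤ) : ℝ) := by push_cast; ring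
    _ ≤ ((|x| : ℤ) : ℝ) := by exact_mod_cast h2
    _ = |(x : ℝ)| := by push_cast; ring
  rw [abs_mul, abs_of_pos hε]
  nlinarith

lemma variation_tendsto (G : ℝ → ℝ) (hGc : Continuous G) (R : ℝ) (hR : 0 ≤ R)
    (hsupp : ∀ u : ℝ, R < |u| → G u = 0) :
    Tendsto (fun ε : ℝ => ∑' x : ℤ, ε * |G (ε * ((x - 1 : ℤ) : ℝ)) - G (ε * (x : ℝ))|)
      (𝓝[>] 0) (𝓝 0) := by
  have hGuc : UniformContinuous G := by
    have hcs : HasCompactSupport G := by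
      apply HasCompactSupport.intro (isCompact_Icc (a := -R) (b := R))
      intro u hu
      apply hsupp
      by_contra hle
      push_neg at hle
      exact hu (Set.mem_Icc.2 (abs_le.1 hle))
    exact hcs.uniformContinuous_of_continuous hGc
  rw [Metric.tendsto_nhds]
  intro δ' hδ'
  set δ : ℝ := δ' / (2 * R + 8) with hδdef
  have hδpos : 0 < δ := by positivity
  obtain ⟨ε₀, hε₀pos, hε₀⟩ := Metric.uniformContinuous_iff.1 hGuc δ hδpos
  filter_upwards [Ioo_mem_nhdsGT_of_mem (Set.mem_Ico.2 ⟨le_rfl, lt_min hε₀pos one_pos⟩)]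
    with ε hε
  obtain ⟨hεpos, hεlt⟩ := hε
  have hεε₀ : ε < ε₀ := hεlt.trans_le (min_le_left _ _)
  have hε1 : ε ≤ 1 := (hεlt.trans_le (min_le_right _ _)).le
  set N : ℕ := ⌈R / ε⌉₊ with hNdef
  have hNε : R ≤ N * ε := by
    rw [← div_le_iff₀ hεpos]; exact Nat.le_ceil _
  have hNε' : (N : ℝ) * ε ≤ R + ε := by
    have : (N : ℝ) ≤ R / ε + 1 := (Nat.ceil_lt_add_one (by positivity)).le
    calc (N:ℝ) * ε ≤ (R / ε + 1) * ε := by nlinarith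
    _ = R + ε := by field_simp
  set K : ℤ := (N : ℤ) + 2 with hKdef
  have hzero : ∀ x : ℤ, x ∉ Finset.Icc (-K) K →
      ε * |G (ε * ((x - 1 : ℤ) : ℝ)) - G (ε * (x : ℝ))| = 0 := by
    intro x hx
    rw [Finset.mem_Icc] at hx
    rw [G_window hsupp hεpos x (by rcases abs_cases x with ⟨h1,h2⟩|⟨h1,h2⟩ <;> omega),
      G_window hsupp hεpos (x - 1) (by rcases abs_cases (x-1) with ⟨h1,h2⟩|⟨h1,h2⟩ <;> omega)]
    simp
  rw [Real.dist_eq, sub_zero, tsum_eq_sum hzero]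
  have hcard : (Finset.Icc (-K) K).card = 2 * N + 5 := by
    rw [Int.card_Icc]
    omega
  have habs : abs (∑ x ∈ Finset.Icc (-K) K, ε * |G (ε * ((x - 1 : ℤ) : ℝ)) - G (ε * (x : ℝ))|)
      ≤ ∑ x ∈ Finset.Icc (-K) K, ε * δ := by
    refine (Finset.abs_sum_le_sum_abs _ _).trans (Finset.sum_le_sum fun x _ => ?_)
    rw [abs_of_nonneg (by positivity)]
    have hd : dist (ε * ((x - 1 : ℤ) : ℝ)) (ε * (x : ℝ)) < ε₀ := by
      rw [Real.dist_eq]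
      have : ε * ((x - 1 : ℤ) : ℝ) - ε * (x : ℝ) = -ε := by push_cast; ring
      rw [this, abs_neg, abs_of_pos hεpos]
      exact hεε₀
    have := hε₀ hd
    rw [Real.dist_eq] at this
    nlinarith [this]
  refine habs.trans_lt ?_
  rw [Finset.sum_const, hcard, nsmul_eq_mul]
  have : ((2 * N + 5 : ℕ) : ℝ) * (ε * δ) ≤ (2 * R + 7) * δ := by
    push_cast
    nlinarith
  refine this.trans_lt ?_
  rw [hδdef, ← mul_div_assoc, div_lt_iff₀ (by linarith)]
  nlinarith

lemma abs_coeff_sum_le {G : ℝ → ℝ} {R : ℝ} (hR : 0 ≤ R)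
    (hsupp : ∀ u : ℝ, R < |u| → G u = 0) {B : ℝ} (hB : ∀ u, |G u| ≤ B)
    {ε : ℝ} (hεpos : 0 < ε) (hε1 : ε ≤ 1) :
    ∑' x : ℤ, |ε * G (ε * (x : ℝ))| ≤ (2 * R + 7) * B := by
  have hB0 : 0 ≤ B := (abs_nonneg _).trans (hB 0)
  set N : ℕ := ⌈R / ε⌉₊ with hNdef
  have hNε' : (N : ℝ) * ε ≤ R + ε := by
    have : (N : ℝ) ≤ R / ε + 1 := (Nat.ceil_lt_add_one (by positivity)).le
    calc (N:ℝ) * ε ≤ (R / ε + 1) * ε := by nlinarith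
    _ = R + ε := by field_simp
  set K : ℤ := (N : ℤ) + 2 with hKdef
  have hzero : ∀ x : ℤ, x ∉ Finset.Icc (-K) K → |ε * G (ε * (x : ℝ))| = 0 := by
    intro x hx
    rw [Finset.mem_Icc] at hx
    rw [G_window hsupp hεpos x (by rcases abs_cases x with ⟨h1,h2⟩|⟨h1,h2⟩ <;> omega)]
    simp
  rw [tsum_eq_sum hzero]
  have hcard : (Finset.Icc (-K) K).card = 2 * N + 5 := by
    rw [Int.card_Icc]; omega
  calc ∑ x ∈ Finset.Icc (-K) K, |ε * G (ε * (x : ℝ))|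
      ≤ ∑ _x ∈ Finset.Icc (-K) K, ε * B := by
        refine Finset.sum_le_sum fun x _ => ?_
        rw [abs_mul, abs_of_pos hεpos]
        exact mul_le_mul_of_nonneg_left (hB _) hεpos.le
    _ = ((2 * N + 5 : ℕ) : ℝ) * (ε * B) := by rw [Finset.sum_const, hcard, nsmul_eq_mul]
    _ ≤ (2 * R + 7) * B := by push_cast; nlinarith

lemma weighted_zero {H : Type*} [NormedAddCommGroup H] [NormedSpace ℝ H]
    (U : ℤ → H →ₗ[ℝ] H) (hUnorm : ∀ x g, ‖U x g‖ = ‖g‖)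
    (hUsucc : ∀ (x : ℤ) (g : H), U x (U 1 g) = U (x + 1) g)
    (F₀ : H) (hF₀ : F₀ ∈ closure ((LinearMap.range (U 1 - LinearMap.id)) : Set H))
    (G : ℝ → ℝ) (hGc : Continuous G) (R : ℝ) (hR : 0 ≤ R)
    (hsupp : ∀ u : ℝ, R < |u| → G u = 0) :
    Tendsto (fun ε : ℝ => ‖∑' x : ℤ, (ε * G (ε * (x : ℝ))) • U x F₀‖) (𝓝[>] 0) (𝓝 0) := by
  have hcs : HasCompactSupport G := by
    apply HasCompactSupport.intro (isCompact_Icc (a := -R) (b := R))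
    intro u hu
    apply hsupp
    by_contra hle
    push_neg at hle
    exact hu (Set.mem_Icc.2 (abs_le.1 hle))
  obtain ⟨B, hB⟩ : ∃ B, ∀ u, |G u| ≤ B := by
    obtain ⟨B, hB⟩ := hGc.norm.bddAbove_range_of_hasCompactSupport hcs.norm
    exact ⟨B, fun u => by simpa [Real.norm_eq_abs] using hB (Set.mem_range_self u)⟩
  have hB0 : 0 ≤ B := (abs_nonneg _).trans (hB 0)
  rw [Metric.tendsto_nhds]
  intro δ' hδ'
  -- choose an approximation from the range of `U 1 - id`
  set δ₁ : ℝ := δ' / (2 * ((2 * R + 7) * B + 1)) with hδ₁def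
  have hδ₁pos : 0 < δ₁ := by positivity
  obtain ⟨w, hw_mem, hw⟩ := Metric.mem_closure_iff.1 hF₀ δ₁ hδ₁pos
  obtain ⟨g, rfl⟩ := hw_mem
  rw [LinearMap.sub_apply, LinearMap.id_apply] at hw
  set w : H := U 1 g - g with hwdef
  rw [dist_comm, dist_eq_norm] at hw
  -- the variation term
  have hv := variation_tendsto G hGc R hR hsupp
  rw [Metric.tendsto_nhds] at hv
  have hδ₂pos : (0:ℝ) < δ' / (2 * (‖g‖ + 1)) := by positivity
  filter_upwards [hv _ hδ₂pos,
    Ioo_mem_nhdsGT_of_mem (Set.mem_Ico.2 ⟨le_rfl, one_pos⟩)] with ε hvε hε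
  obtain ⟨hεpos, hε1⟩ := hε
  rw [Real.dist_eq, sub_zero] at hvε
  set c : ℤ → ℝ := fun x => ε * G (ε * (x : ℝ)) with hcdef
  set c' : ℤ → ℝ := fun x => ε * G (ε * ((x - 1 : ℤ) : ℝ)) with hc'def
  set N : ℕ := ⌈R / ε⌉₊ with hNdef
  set K : ℤ := (N : ℤ) + 2 with hKdef
  have hczero : ∀ x : ℤ, x ∉ Finset.Icc (-K) K → c x = 0 := by
    intro x hx
    rw [Finset.mem_Icc] at hx
    show ε * G (ε * (x : ℝ)) = 0
    rw [G_window hsupp hεpos x (by rcases abs_cases x with ⟨h1,h2⟩|⟨h1,h2⟩ <;> omega)]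
    simp
  have hc'zero : ∀ x : ℤ, x ∉ Finset.Icc (-K) K → c' x = 0 := by
    intro x hx
    rw [Finset.mem_Icc] at hx
    show ε * G (ε * ((x - 1 : ℤ) : ℝ)) = 0
    rw [G_window hsupp hεpos (x-1) (by rcases abs_cases (x-1) with ⟨h1,h2⟩|⟨h1,h2⟩ <;> omega)]
    simp
  -- summability of everything in sight
  have hsum : ∀ (v : ℤ → H), (∀ x, x ∉ Finset.Icc (-K) K → v x = 0) → Summable v :=
    fun v hv => summable_of_ne_finset_zero hv
  have hs1 : Summable (fun x : ℤ => c x • U x (F₀ - w)) :=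
    hsum _ (fun x hx => by rw [hczero x hx, zero_smul])
  have hs2 : Summable (fun x : ℤ => c x • U x w) :=
    hsum _ (fun x hx => by rw [hczero x hx, zero_smul])
  have hs3 : Summable (fun x : ℤ => c' x • U x g) :=
    hsum _ (fun x hx => by rw [hc'zero x hx, zero_smul])
  have hs4 : Summable (fun x : ℤ => c x • U x g) :=
    hsum _ (fun x hx => by rw [hczero x hx, zero_smul])
  -- decompose the sum
  have hdecomp : ∑' x : ℤ, c x • U x F₀
      = (∑' x : ℤ, c x • U x (F₀ - w)) + ((∑' x : ℤ, c' x • U x g) - ∑' x : ℤ, c x • U x g) := by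
    have h1 : ∀ x : ℤ, c x • U x F₀ = c x • U x (F₀ - w) + c x • U x w := by
      intro x
      rw [← smul_add, ← map_add]
      congr 2
      abel
    rw [tsum_congr h1, Summable.tsum_add hs1 hs2]
    congr 1
    have h2 : ∀ x : ℤ, c x • U x w = c x • U (x + 1) g - c x • U x g := by
      intro x
      rw [hwdef, map_sub, smul_sub, hUsucc]
    rw [tsum_congr h2, Summable.tsum_sub ?_ hs4]
    · congr 1
      have := (Equiv.addRight (1 : ℤ)).tsum_eq (fun x : ℤ => c' x • U x g)
      rw [← this]
      refine tsum_congr fun x => ?_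
      have hcc : c' (x + 1) = c x := by
        rw [hc'def, hcdef]
        simp
      simp only [Equiv.coe_addRight]
      rw [hcc]
    · -- Summable (fun x => c x • U (x+1) g)
      refine hsum _ fun x hx => ?_
      rw [hczero x hx, zero_smul]
  rw [Real.dist_eq, sub_zero, abs_of_nonneg (norm_nonneg _), hdecomp]
  -- bound the two pieces
  have hbound1 : ‖∑' x : ℤ, c x • U x (F₀ - w)‖ ≤ (2 * R + 7) * B * δ₁ := by
    have hn : Summable fun x : ℤ => ‖c x • U x (F₀ - w)‖ := by
      refine summable_of_ne_finset_zero (s := Finset.Icc (-K) K) fun x hx => ?_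
      rw [hczero x hx, zero_smul, norm_zero]
    refine (norm_tsum_le_tsum_norm hn).trans ?_
    have heq : ∀ x : ℤ, ‖c x • U x (F₀ - w)‖ = |c x| * ‖F₀ - w‖ := by
      intro x
      rw [norm_smul, Real.norm_eq_abs, hUnorm]
    rw [tsum_congr heq, tsum_mul_right]
    have h1 : ∑' x : ℤ, |c x| ≤ (2 * R + 7) * B := abs_coeff_sum_le hR hsupp hB hεpos hε1.le
    have h2 : ‖F₀ - w‖ ≤ δ₁ := by rw [norm_sub_rev]; exact hw.le
    have h3 : (0:ℝ) ≤ ∑' x : ℤ, |c x| := tsum_nonneg fun x => abs_nonneg _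
    nlinarith
  have hbound2 : ‖(∑' x : ℤ, c' x • U x g) - ∑' x : ℤ, c x • U x g‖
      ≤ (∑' x : ℤ, ε * |G (ε * ((x - 1 : ℤ) : ℝ)) - G (ε * (x : ℝ))|) * ‖g‖ := by
    rw [← Summable.tsum_sub hs3 hs4]
    have hn : Summable fun x : ℤ => ‖c' x • U x g - c x • U x g‖ := by
      refine summable_of_ne_finset_zero (s := Finset.Icc (-K) K) fun x hx => ?_
      rw [hczero x hx, hc'zero x hx, zero_smul, sub_zero, norm_zero]
    refine (norm_tsum_le_tsum_norm hn).trans ?_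
    have heq : ∀ x : ℤ, ‖c' x • U x g - c x • U x g‖
        = (ε * |G (ε * ((x - 1 : ℤ) : ℝ)) - G (ε * (x : ℝ))|) * ‖g‖ := by
      intro x
      rw [← sub_smul, norm_smul, Real.norm_eq_abs, hUnorm, hc'def, hcdef]
      congr 1
      rw [← mul_sub, abs_mul, abs_of_pos hεpos]
    rw [tsum_congr heq, tsum_mul_right]
  have hfinal : ‖(∑' x : ℤ, c x • U x (F₀ - w))
        + ((∑' x : ℤ, c' x • U x g) - ∑' x : ℤ, c x • U x g)‖
      ≤ (2 * R + 7) * B * δ₁ + (∑' x : ℤ, ε * |G (ε * ((x - 1 : ℤ) : ℝ)) - G (ε * (x : ℝ))|) * ‖g‖ :=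
    (norm_add_le _ _).trans (add_le_add hbound1 hbound2)
  refine hfinal.trans_lt ?_
  have h1 : (2 * R + 7) * B * δ₁ < δ' / 2 := by
    have h2RB : (0:ℝ) < (2 * R + 7) * B + 1 := by nlinarith
    rw [hδ₁def, ← mul_div_assoc, div_lt_div_iff₀ (by positivity) (by norm_num)]
    nlinarith
  have hg1 : (0:ℝ) < ‖g‖ + 1 := by positivity
  have hvnn : (0:ℝ) ≤ ∑' x : ℤ, ε * |G (ε * ((x - 1 : ℤ) : ℝ)) - G (ε * (x : ℝ))| :=
    tsum_nonneg fun x => by positivity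
  have hv' : (∑' x : ℤ, ε * |G (ε * ((x - 1 : ℤ) : ℝ)) - G (ε * (x : ℝ))|) < δ' / (2 * (‖g‖ + 1)) :=
    lt_of_abs_lt hvε
  have h2 : (∑' x : ℤ, ε * |G (ε * ((x - 1 : ℤ) : ℝ)) - G (ε * (x : ℝ))|) * ‖g‖ < δ' / 2 := by
    have hkey : δ' / (2 * (‖g‖ + 1)) * (‖g‖ + 1) = δ' / 2 := by field_simp
    nlinarith [mul_lt_mul_of_pos_right hv' hg1, norm_nonneg g]
  linarith

/-- The shift by `x` on configuration space. -/
def shiftS (x : ℤ) (η : ℤ → Bool) : ℤ → Bool := fun y => η (y + x)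

lemma shiftS_comp (x z : ℤ) (η : ℤ → Bool) : shiftS x (shiftS z η) = shiftS (x + z) η := by
  funext y
  simp only [shiftS, add_assoc]

lemma shiftS_measurable (x : ℤ) : Measurable (shiftS x) :=
  measurable_pi_lambda _ fun y => measurable_pi_apply _

lemma Lp_coeFn_sum {α : Type*} {ι : Type*} [MeasurableSpace α] {μ : Measure α}
    (s : Finset ι) (v : ι → Lp ℝ 2 μ) :
    ⇑(∑ x ∈ s, v x) =ᵐ[μ] fun a => ∑ x ∈ s, (v x : α → ℝ) a := by
  classical
  induction s using Finset.induction_on with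
  | empty =>
    rw [Finset.sum_empty]
    filter_upwards [Lp.coeFn_zero (E := ℝ) (p := 2) (μ := μ)] with p hp
    simp only [Finset.sum_empty]
    exact hp.trans rfl
  | @insert a s h ih =>
    rw [Finset.sum_insert h]
    filter_upwards [Lp.coeFn_add (v a) (∑ x ∈ s, v x), ih] with p h1 h2
    rw [Finset.sum_insert h, h1]
    simp only [Pi.add_apply, h2]

theorem weighted_mean_ergodic_L2
    (ν : Measure (ℤ → Bool)) [IsProbabilityMeasure ν]
    (T : (ℤ → Bool) → (ℤ → Bool)) (hT : ∀ η y, T η y = η (y + 1))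
    (hErg : Ergodic T ν)
    (f : (ℤ → Bool) → ℝ) (hf : MemLp f 2 ν)
    (G : ℝ → ℝ) (hGcont : Continuous G) (hGsupp : HasCompactSupport G) :
    Tendsto
      (fun ε : ℝ => eLpNorm
        (fun η => (ε * ∑' x : ℤ, f (fun y => η (y + x)) * G (ε * x))
          - (∫ η, f η ∂ν) * (∫ u : ℝ, G u)) 2 ν)
      (𝓝[>] (0 : ℝ)) (𝓝 0) := by
  classical
  have hTS : T = shiftS 1 := funext fun η => funext fun y => hT η y
  subst hTS
  -- support radius
  obtain ⟨R, hR0, hsupp⟩ : ∃ R : ℝ, 0 ≤ R ∧ ∀ u : ℝ, R < |u| → G u = 0 := by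
    obtain ⟨r, hr⟩ := hGsupp.isBounded.subset_closedBall 0
    refine ⟨max r 0, le_max_right _ _, fun u hu => ?_⟩
    apply image_eq_zero_of_notMem_tsupport
    intro hmem
    have := hr hmem
    rw [Metric.mem_closedBall, Real.dist_eq, sub_zero] at this
    have : |u| ≤ max r 0 := this.trans (le_max_left _ _)
    linarith
  -- measure preservation of all shifts
  have hS1 : MeasurePreserving (shiftS 1) ν ν := hErg.toMeasurePreserving
  have hSm1 : MeasurePreserving (shiftS (-1)) ν ν := by
    let e : (ℤ → Bool) ≃ᵐ (ℤ → Bool) :=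
      { toFun := shiftS 1
        invFun := shiftS (-1)
        left_inv := fun η => by rw [shiftS_comp]; funext y; simp [shiftS]
        right_inv := fun η => by rw [shiftS_comp]; funext y; simp [shiftS]
        measurable_toFun := shiftS_measurable 1
        measurable_invFun := shiftS_measurable (-1) }
    exact (MeasurePreserving.symm e hS1 : MeasurePreserving (shiftS (-1)) ν ν)
  have hMP : ∀ x : ℤ, MeasurePreserving (shiftS x) ν ν := by
    have h0 : MeasurePreserving (shiftS 0) ν ν := by
      have h00 : shiftS (0 : ℤ) = id := funext fun η => funext fun y => by simp [shiftS]
      rw [h00]; exact MeasurePreserving.id ν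
    have hpos : ∀ n : ℕ, MeasurePreserving (shiftS (n : ℤ)) ν ν := by
      intro n
      induction n with
      | zero => exact_mod_cast h0
      | succ n ih =>
        have hc : shiftS ((n + 1 : ℕ) : ℤ) = shiftS 1 ∘ shiftS (n : ℤ) := by
          have h1 : ((n + 1 : ℕ) : ℤ) = 1 + (n : ℤ) := by push_cast; ring
          rw [h1]; funext η; exact (shiftS_comp 1 n η).symm
        rw [hc]; exact hS1.comp ih
    have hneg : ∀ n : ℕ, MeasurePreserving (shiftS (-(n : ℤ))) ν ν := by
      intro n
      induction n with
      | zero => simpa using h0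
      | succ n ih =>
        have hc : shiftS (-((n + 1 : ℕ) : ℤ)) = shiftS (-1) ∘ shiftS (-(n : ℤ)) := by
          have h1 : (-((n + 1 : ℕ) : ℤ)) = -1 + -(n : ℤ) := by push_cast; ring
          rw [h1]; funext η; exact (shiftS_comp (-1) (-(n:ℤ)) η).symm
        rw [hc]; exact hSm1.comp ih
    intro x
    obtain ⟨n, rfl | rfl⟩ := Int.eq_nat_or_neg x
    exacts [hpos n, hneg n]
  -- the Koopman operators
  set Ux : ℤ → (Lp ℝ 2 ν →ₗ[ℝ] Lp ℝ 2 ν) := fun x => Lp.compMeasurePreservingₗ ℝ (shiftS x) (hMP x) with hUxdef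
  have hUnorm : ∀ (x : ℤ) (g : Lp ℝ 2 ν), ‖Ux x g‖ = ‖g‖ := fun x g =>
    Lp.norm_compMeasurePreserving g (hMP x)
  have hcomp : ∀ (x : ℤ) (g : Lp ℝ 2 ν), ⇑(Ux x g) =ᵐ[ν] (g : (ℤ → Bool) → ℝ) ∘ shiftS x := fun x g =>
    Lp.coeFn_compMeasurePreserving g (hMP x)
  have hKoop : ∀ (x : ℤ) (φ : (ℤ → Bool) → ℝ) (g : Lp ℝ 2 ν),
      (g : (ℤ → Bool) → ℝ) =ᵐ[ν] φ → ⇑(Ux x g) =ᵐ[ν] φ ∘ shiftS x := fun x φ g h =>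
    (hcomp x g).trans ((hMP x).quasiMeasurePreserving.ae_eq_comp h)
  set one : Lp ℝ 2 ν := MemLp.toLp _ (memLp_const (1 : ℝ)) with honedef
  have hone_coe : ⇑one =ᵐ[ν] fun _ => (1 : ℝ) := MemLp.coeFn_toLp _
  have hUone : ∀ x : ℤ, Ux x one = one := by
    intro x
    apply Lp.ext
    exact (hKoop x _ one hone_coe).trans hone_coe.symm
  have hUsucc : ∀ (x : ℤ) (g : Lp ℝ 2 ν), Ux x (Ux 1 g) = Ux (x + 1) g := by
    intro x g
    apply Lp.ext
    have h1 : ⇑(Ux x (Ux 1 g)) =ᵐ[ν] ((g : (ℤ → Bool) → ℝ) ∘ shiftS 1) ∘ shiftS x :=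
      hKoop x _ _ (hcomp 1 g)
    have h2 : ((g : (ℤ → Bool) → ℝ) ∘ shiftS 1) ∘ shiftS x
        = (g : (ℤ → Bool) → ℝ) ∘ shiftS (x + 1) := by
      funext η
      simp only [Function.comp_apply]
      rw [shiftS_comp, add_comm]
    rw [h2] at h1
    exact h1.trans (hcomp (x + 1) g).symm
  set Ucli : Lp ℝ 2 ν →ₗᵢ[ℝ] Lp ℝ 2 ν := Lp.compMeasurePreservingₗᵢ ℝ (shiftS 1) (hMP 1) with hUclidef
  set Uc : Lp ℝ 2 ν →L[ℝ] Lp ℝ 2 ν := Ucli.toContinuousLinearMap with hUcdef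
  have hUc1 : ∀ g : Lp ℝ 2 ν, Uc g = Ux 1 g := fun g => rfl
  have hUcnorm : ‖Uc‖ ≤ 1 := Ucli.norm_toContinuousLinearMap_le
  set F : Lp ℝ 2 ν := MemLp.toLp f hf with hFdef
  have hF_coe : ⇑F =ᵐ[ν] f := MemLp.coeFn_toLp hf
  set c : ℝ := ∫ η, f η ∂ν with hcdef
  set I : ℝ := ∫ u : ℝ, G u with hIdef
  -- von Neumann's mean ergodic theorem
  have hvn := Uc.tendsto_birkhoffAverage_orthogonalProjection (𝕜 := ℝ) hUcnorm F
  set Q : Submodule ℝ (Lp ℝ 2 ν) := Uc.eqLocus (1 : Lp ℝ 2 ν →L[ℝ] Lp ℝ 2 ν) with hQdef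
  haveI hQinst : Submodule.HasOrthogonalProjection Q := by rw [hQdef]; infer_instance
  set Fb : Lp ℝ 2 ν := ((Q.orthogonalProjectionOnto F : Q) : Lp ℝ 2 ν) with hFbdef
  have hfix : Ux 1 Fb = Fb := by
    rw [← hUc1]
    exact (Q.orthogonalProjectionOnto F).2
  -- `Fb` is a.e. constant, equal to `c`
  have hinv : (Fb : (ℤ → Bool) → ℝ) ∘ shiftS 1 =ᵐ[ν] ⇑Fb := by
    have := hKoop 1 ((Fb : (ℤ → Bool) → ℝ)) Fb (EventuallyEq.refl _ _)
    rw [hfix] at this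
    exact this.symm
  obtain ⟨cc, hcc⟩ := hErg.quasiErgodic.ae_eq_const_of_ae_eq_comp₀
    ((Lp.aestronglyMeasurable Fb).aemeasurable.nullMeasurable) hinv
  have hone_mem : one ∈ Q := by
    rw [hQdef, LinearMap.mem_eqLocus]
    simpa using (hUc1 one).trans (hUone 1)
  have hFb_int : ∫ η, (Fb : (ℤ → Bool) → ℝ) η ∂ν = c := by
    have horth := Submodule.sub_starProjection_mem_orthogonal (K := Q) F
    have hz : @inner ℝ _ _ one (F - Fb) = 0 := by
      have hz0 := (Submodule.mem_orthogonal Q _).1 horth one hone_mem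
      exact hz0
    rw [L2.inner_def] at hz
    have hint : ∫ a, @inner ℝ _ _ (one a) ((F - Fb) a) ∂ν
        = ∫ a, (f a - (Fb : (ℤ → Bool) → ℝ) a) ∂ν := by
      refine integral_congr_ae ?_
      filter_upwards [hone_coe, Lp.coeFn_sub F Fb, hF_coe] with a h1 h2 h3
      rw [h2]
      simp only [Pi.sub_apply]
      rw [h1, h3]
      simp [RCLike.inner_apply]
    rw [hint] at hz
    have hfint : Integrable f ν := hf.integrable (by norm_num)
    have hFbint : Integrable (Fb : (ℤ → Bool) → ℝ) ν :=
      (Lp.memLp Fb).integrable (by norm_num)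
    rw [integral_sub hfint hFbint, sub_eq_zero] at hz
    rw [← hz, hcdef]
  have hcc_eq : cc = c := by
    have h1 : ∫ η, (Fb : (ℤ → Bool) → ℝ) η ∂ν = cc := by
      rw [integral_congr_ae hcc]
      simp [measure_univ]
    rw [h1] at hFb_int
    exact hFb_int
  have hFbeq : Fb = c • one := by
    apply Lp.ext
    refine hcc.trans ?_
    have : ⇑(c • one) =ᵐ[ν] fun _ => c := by
      filter_upwards [Lp.coeFn_smul c one, hone_coe] with a h1 h2
      rw [h1]
      simp [h2]
    refine EventuallyEq.trans ?_ this.symm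
    rw [hcc_eq]
    rfl
  -- `F - c • one` lies in the closure of the range of `Ux 1 - id`
  have hcl : F - c • one ∈ closure ((LinearMap.range (Ux 1 - LinearMap.id)) : Set (Lp ℝ 2 ν)) := by
    rw [← hFbeq]
    refine mem_closure_of_tendsto (tendsto_const_nhds.sub hvn) ?_
    filter_upwards [eventually_ge_atTop 1] with N hN
    have hmem : ∀ k : ℕ, F - (⇑Uc)^[k] F ∈ LinearMap.range (Ux 1 - LinearMap.id) := by
      intro k
      induction k with
      | zero => simpa using Submodule.zero_mem _
      | succ k ih =>
        have heq : F - (⇑Uc)^[k + 1] F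
            = (F - (⇑Uc)^[k] F) - ((Ux 1 - (LinearMap.id : Lp ℝ 2 ν →ₗ[ℝ] Lp ℝ 2 ν))
              ((⇑Uc)^[k] F)) := by
          simp only [LinearMap.sub_apply, LinearMap.id_apply, Function.iterate_succ_apply']
          rw [← hUc1]
          abel
        rw [heq]
        exact Submodule.sub_mem _ ih (LinearMap.mem_range_self _ _)
    have hba : F - birkhoffAverage ℝ (⇑Uc) _root_.id N F
        = (N : ℝ)⁻¹ • ∑ k ∈ Finset.range N, (F - (⇑Uc)^[k] F) := by
      have hN0 : (N : ℝ) ≠ 0 := by positivity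
      rw [birkhoffAverage, birkhoffSum, Finset.sum_sub_distrib, smul_sub, Finset.sum_const,
        Finset.card_range, ← Nat.cast_smul_eq_nsmul ℝ, smul_smul, inv_mul_cancel₀ hN0, one_smul]
      simp
    rw [hba]
    exact SetLike.mem_coe.2
      (Submodule.smul_mem _ _ (Submodule.sum_mem _ fun k _ => hmem k))
  -- the weighted ergodic sum with the fluctuation part tends to zero
  have hW := weighted_zero Ux hUnorm hUsucc (F - c • one) hcl G hGcont R hR0 hsupp
  have hRiem := riemann_sum_tendsto G hGcont R hR0 hsupp
  -- assemble
  set Θ : ℝ → Lp ℝ 2 ν := fun ε => (∑' x : ℤ, (ε * G (ε * (x : ℝ))) • Ux x F) - (c * I) • one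
    with hΘdef
  have hsplit : ∀ ε : ℝ, 0 < ε →
      ∑' x : ℤ, (ε * G (ε * (x : ℝ))) • Ux x F
        = (∑' x : ℤ, (ε * G (ε * (x : ℝ))) • Ux x (F - c • one))
          + (∑' x : ℤ, ε * G (ε * (x : ℝ))) • (c • one) := by
    intro ε hε
    set K : ℤ := (⌈R / ε⌉₊ : ℤ) + 2 with hKdef
    have hcz : ∀ x : ℤ, x ∉ Finset.Icc (-K) K → ε * G (ε * (x : ℝ)) = 0 := by
      intro x hx
      rw [Finset.mem_Icc] at hx
      rw [G_window hsupp hε x (by rcases abs_cases x with ⟨h1,h2⟩|⟨h1,h2⟩ <;> omega)]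
      simp
    have hs1 : Summable fun x : ℤ => (ε * G (ε * (x : ℝ))) • Ux x (F - c • one) :=
      summable_of_ne_finset_zero (s := Finset.Icc (-K) K) fun x hx => by
        rw [hcz x hx, zero_smul]
    have hs2 : Summable fun x : ℤ => (ε * G (ε * (x : ℝ))) • (c • one : Lp ℝ 2 ν) :=
      summable_of_ne_finset_zero (s := Finset.Icc (-K) K) fun x hx => by
        rw [hcz x hx, zero_smul]
    have hs3 : Summable fun x : ℤ => ε * G (ε * (x : ℝ)) :=
      summable_of_ne_finset_zero (s := Finset.Icc (-K) K) fun x hx => hcz x hx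
    have hterm : ∀ x : ℤ, (ε * G (ε * (x : ℝ))) • Ux x F
        = (ε * G (ε * (x : ℝ))) • Ux x (F - c • one) + (ε * G (ε * (x : ℝ))) • (c • one : Lp ℝ 2 ν) := by
      intro x
      rw [← smul_add]
      congr 1
      rw [map_sub, LinearMap.map_smul, hUone]
      abel
    rw [tsum_congr hterm, Summable.tsum_add hs1 hs2, Summable.tsum_smul_const hs3]
  have hnorm_bound : ∀ᶠ ε in 𝓝[>] (0:ℝ), ‖Θ ε‖
      ≤ ‖∑' x : ℤ, (ε * G (ε * (x : ℝ))) • Ux x (F - c • one)‖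
        + |c| * |(∑' x : ℤ, ε * G (ε * (x : ℝ))) - I| * ‖one‖ := by
    filter_upwards [self_mem_nhdsWithin] with ε hε
    rw [hΘdef]
    simp only
    rw [hsplit ε hε]
    have heq : (∑' x : ℤ, (ε * G (ε * (x : ℝ))) • Ux x (F - c • one))
          + (∑' x : ℤ, ε * G (ε * (x : ℝ))) • (c • one) - (c * I) • one
        = (∑' x : ℤ, (ε * G (ε * (x : ℝ))) • Ux x (F - c • one))
          + (c * ((∑' x : ℤ, ε * G (ε * (x : ℝ))) - I)) • one := by
      module
    rw [heq]
    refine (norm_add_le _ _).trans ?_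
    gcongr
    rw [norm_smul, Real.norm_eq_abs, abs_mul]
  have habs : Tendsto (fun ε : ℝ => ‖∑' x : ℤ, (ε * G (ε * (x : ℝ))) • Ux x (F - c • one)‖
      + |c| * |(∑' x : ℤ, ε * G (ε * (x : ℝ))) - I| * ‖one‖) (𝓝[>] (0:ℝ)) (𝓝 0) := by
    have h2 : Tendsto (fun ε : ℝ => |c| * |(∑' x : ℤ, ε * G (ε * (x : ℝ))) - I| * ‖one‖)
        (𝓝[>] (0:ℝ)) (𝓝 0) := by
      have h3 : Tendsto (fun ε : ℝ => (∑' x : ℤ, ε * G (ε * (x : ℝ))) - I)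
          (𝓝[>] (0:ℝ)) (𝓝 0) := by
        have h3' : Tendsto (fun ε : ℝ => (∑' x : ℤ, ε * G (ε * (x : ℝ))) - I)
            (𝓝[>] (0:ℝ)) (𝓝 (I - I)) := hRiem.sub tendsto_const_nhds
        rw [sub_self] at h3'
        exact h3'
      have h4 := h3.abs
      rw [abs_zero] at h4
      have h5 := (h4.const_mul (|c|)).mul_const (‖one‖)
      simpa using h5
    simpa using hW.add h2
  have hΘnorm : Tendsto (fun ε : ℝ => ‖Θ ε‖) (𝓝[>] (0:ℝ)) (𝓝 0) :=
    squeeze_zero' (Eventually.of_forall fun ε => norm_nonneg _) hnorm_bound habs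
  -- a.e. identification of the statement's random variable with `Θ ε`
  have hae : ∀ ε : ℝ, ε ∈ Set.Ioi (0:ℝ) →
      (fun η => (ε * ∑' x : ℤ, f (fun y => η (y + x)) * G (ε * x)) - c * I) =ᵐ[ν] ⇑(Θ ε) := by
    intro ε hε
    rw [Set.mem_Ioi] at hε
    set K : ℤ := (⌈R / ε⌉₊ : ℤ) + 2 with hKdef
    have hGz : ∀ x : ℤ, x ∉ Finset.Icc (-K) K → G (ε * (x : ℝ)) = 0 := by
      intro x hx
      rw [Finset.mem_Icc] at hx
      exact G_window hsupp hε x (by rcases abs_cases x with ⟨h1,h2⟩|⟨h1,h2⟩ <;> omega)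
    have hts : ∑' x : ℤ, (ε * G (ε * (x : ℝ))) • Ux x F
        = ∑ x ∈ Finset.Icc (-K) K, (ε * G (ε * (x : ℝ))) • Ux x F :=
      tsum_eq_sum fun x hx => by rw [hGz x hx, mul_zero, zero_smul]
    have hsum_coe := Lp_coeFn_sum (Finset.Icc (-K) K)
      (fun x => (ε * G (ε * (x : ℝ))) • Ux x F)
    have hterm_coe : ∀ᵐ η ∂ν, ∀ x ∈ Finset.Icc (-K) K,
        (((ε * G (ε * (x : ℝ))) • Ux x F : Lp ℝ 2 ν) : (ℤ → Bool) → ℝ) η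
          = (ε * G (ε * (x : ℝ))) * f (shiftS x η) := by
      rw [Filter.eventually_all_finset]
      intro x _
      filter_upwards [Lp.coeFn_smul (ε * G (ε * (x : ℝ))) (Ux x F), hKoop x f F hF_coe]
        with η h1 h2
      rw [h1]
      simp only [Pi.smul_apply, smul_eq_mul, h2, Function.comp_apply]
    filter_upwards [Lp.coeFn_sub (∑' x : ℤ, (ε * G (ε * (x : ℝ))) • Ux x F) ((c * I) • one),
      Lp.coeFn_smul (c * I) one, hone_coe, hsum_coe, hterm_coe] with η h1 h2 h3 h4 h5
    have hΘη : (Θ ε : (ℤ → Bool) → ℝ) η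
        = (∑ x ∈ Finset.Icc (-K) K, (ε * G (ε * (x : ℝ))) * f (shiftS x η)) - c * I := by
      rw [hΘdef]
      simp only
      rw [h1]
      simp only [Pi.sub_apply]
      congr 1
      · rw [hts] at *
        rw [h4]
        exact Finset.sum_congr rfl fun x hx => h5 x hx
      · rw [h2]
        simp only [Pi.smul_apply, smul_eq_mul, h3]
        simp
    rw [hΘη]
    congr 1
    have hptw : ∑' x : ℤ, f (fun y => η (y + x)) * G (ε * x)
        = ∑ x ∈ Finset.Icc (-K) K, f (shiftS x η) * G (ε * (x : ℝ)) :=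
      tsum_eq_sum fun x hx => by
        show f (shiftS x η) * G (ε * (x : ℝ)) = 0
        rw [hGz x hx, mul_zero]
    rw [hptw, Finset.mul_sum]
    exact Finset.sum_congr rfl fun x hx => by ring
  -- conclude
  have hkey : Tendsto (fun ε : ℝ => ENNReal.ofReal ‖Θ ε‖) (𝓝[>] (0:ℝ)) (𝓝 0) := by
    have := ENNReal.tendsto_ofReal hΘnorm
    simpa using this
  refine hkey.congr' ?_
  filter_upwards [self_mem_nhdsWithin] with ε hε
  rw [eLpNorm_congr_ae (hae ε hε)]
  rw [Lp.norm_def, ENNReal.ofReal_toReal (Lp.eLpNorm_ne_top _)]
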